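/- The Atiyah–Sutcliffe normalized determinant D_{U(n)} is invariant under permutations of the points: D_{U(n)}(x_{σ(1)},…,x_{σ(n)}) = D_{U(n)}(x₁,…,x_n) for every σ ∈ Σ_n. -/

import Mathlib

open Polynomial

open scoped Classical in
/-- Stereographic projection from the unit sphere in `ℝ³` to the Riemann sphere. -/
noncomputable def sproj (v : EuclideanSpace ℝ (Fin 3)) : OnePoint ℂ :=
  if v 2 = 1 then OnePoint.infty
  else (((v 0 : ℂ) + (v 1 : ℂ) * Complex.I) / (1 - (v 2 : ℂ)) : ℂ)

/-- The linear polynomial `p_z(t) = u t - v` associated to a Hopf lift `z = (u,v)`. -/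
noncomputable def lin (z : ℂ × ℂ) : Polynomial ℂ := C z.1 * X - C z.2

/-- The `2×2` determinant `det(w, w')` of two vectors of `ℂ²`. -/
def det2 (w w' : ℂ × ℂ) : ℂ := w.1 * w'.2 - w.2 * w'.1

/-- The point `t_{ab} = s((x_b - x_a)/‖x_b - x_a‖)` of the Riemann sphere. -/
noncomputable def tpt (x : Fin n → EuclideanSpace ℝ (Fin 3)) (a b : Fin n) : OnePoint ℂ :=
  sproj (‖x b - x a‖⁻¹ • (x b - x a))

/-- A canonical Hopf lift of a point of the Riemann sphere: `(1, ζ)` for finite `ζ`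
(a lift of the root of `t - ζ`), and `(0, 1)` for `ζ = ∞`. -/
noncomputable def liftOf : OnePoint ℂ → ℂ × ℂ
  | OnePoint.infty => (0, 1)
  | OnePoint.some ζ => (1, ζ)

/-- The Atiyah–Sutcliffe normalized determinant `D_{U(n)}(x) = det(M)/V`, computed with
canonical Hopf lifts (by lift-independence this is the normalized determinant). -/
noncomputable def ASD (n : ℕ) (x : Fin n → EuclideanSpace ℝ (Fin 3)) : ℂ :=
  (Matrix.of fun i a : Fin n =>
      (∏ b ∈ Finset.univ.erase a, lin (liftOf (tpt x a b))).coeff i).det /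
    ∏ p ∈ Finset.univ.filter (fun p : Fin n × Fin n => p.1 < p.2),
      det2 (liftOf (tpt x p.1 p.2)) (liftOf (tpt x p.2 p.1))

lemma my_signAux_eq_sign {n : ℕ} (σ : Equiv.Perm (Fin n)) :
    Equiv.Perm.signAux σ = Equiv.Perm.sign σ := by
  refine Equiv.Perm.swap_induction_on σ ?_ ?_
  · simp [Equiv.Perm.signAux_one]
  · intro f x y hxy ih
    rw [Equiv.Perm.signAux_mul, Equiv.Perm.signAux_swap hxy, map_mul,
      Equiv.Perm.sign_swap hxy, ih]

lemma my_prod_eps {n : ℕ} (σ : Equiv.Perm (Fin n)) :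
    ∏ p ∈ Finset.univ.filter (fun p : Fin n × Fin n => p.1 < p.2),
      (if σ p.1 < σ p.2 then (1 : ℂ) else -1)
      = ((Equiv.Perm.sign σ : ℤ) : ℂ) := by
  rw [← my_signAux_eq_sign]
  have h : ((Equiv.Perm.signAux σ : ℤ) : ℂ)
      = ∏ x ∈ Equiv.Perm.finPairsLT n,
          (((if σ x.1 ≤ σ x.2 then (-1 : ℤˣ) else 1) : ℤ) : ℂ) := by
    rw [Equiv.Perm.signAux, ← Units.coeHom_apply, map_prod, Int.cast_prod]
    exact Finset.prod_congr rfl fun p _ => by split <;> simp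
  rw [h]
  refine Finset.prod_bij' (fun p _ => ⟨p.2, p.1⟩) (fun q _ => (q.2, q.1)) ?_ ?_ ?_ ?_ ?_
  · intro p hp
    simp only [Finset.mem_filter, Finset.mem_univ, true_and] at hp
    exact Equiv.Perm.mem_finPairsLT.2 hp
  · intro q hq
    simp only [Finset.mem_filter, Finset.mem_univ, true_and]
    exact Equiv.Perm.mem_finPairsLT.1 hq
  · intro p _; rfl
  · intro q _; rfl
  · intro p _
    by_cases hlt : σ p.1 < σ p.2
    · rw [if_pos hlt, if_neg (not_le.2 hlt)]; simp
    · rw [if_neg hlt, if_pos (not_lt.1 hlt)]; simp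

lemma my_prod_pairs_perm {n : ℕ} (G : Fin n → Fin n → ℂ)
    (hG : ∀ a b, G b a = -G a b) (σ : Equiv.Perm (Fin n)) :
    ∏ p ∈ Finset.univ.filter (fun p : Fin n × Fin n => p.1 < p.2), G (σ p.1) (σ p.2)
      = ((Equiv.Perm.sign σ : ℤ) : ℂ) *
        ∏ p ∈ Finset.univ.filter (fun p : Fin n × Fin n => p.1 < p.2), G p.1 p.2 := by
  have hpt : ∀ p : Fin n × Fin n, G (σ p.1) (σ p.2)
      = (if σ p.1 < σ p.2 then (1 : ℂ) else -1) *
        (if σ p.1 < σ p.2 then G (σ p.1) (σ p.2) else G (σ p.2) (σ p.1)) := by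
    intro p
    by_cases hlt : σ p.1 < σ p.2
    · simp [hlt]
    · simp only [hlt, if_neg, if_false, hG (σ p.2) (σ p.1)]
      rw [hG (σ p.1) (σ p.2)]; ring
  calc ∏ p ∈ Finset.univ.filter (fun p : Fin n × Fin n => p.1 < p.2), G (σ p.1) (σ p.2)
      = ∏ p ∈ Finset.univ.filter (fun p : Fin n × Fin n => p.1 < p.2),
          ((if σ p.1 < σ p.2 then (1 : ℂ) else -1) *
            (if σ p.1 < σ p.2 then G (σ p.1) (σ p.2) else G (σ p.2) (σ p.1))) :=
        Finset.prod_congr rfl fun p _ => hpt p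
    _ = (∏ p ∈ Finset.univ.filter (fun p : Fin n × Fin n => p.1 < p.2),
          (if σ p.1 < σ p.2 then (1 : ℂ) else -1)) *
        ∏ p ∈ Finset.univ.filter (fun p : Fin n × Fin n => p.1 < p.2),
          (if σ p.1 < σ p.2 then G (σ p.1) (σ p.2) else G (σ p.2) (σ p.1)) :=
        Finset.prod_mul_distrib
    _ = ((Equiv.Perm.sign σ : ℤ) : ℂ) *
        ∏ p ∈ Finset.univ.filter (fun p : Fin n × Fin n => p.1 < p.2), G p.1 p.2 := by
        rw [my_prod_eps]
        congr 1
        refine Finset.prod_bij'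
          (fun p _ => if σ p.1 < σ p.2 then (σ p.1, σ p.2) else (σ p.2, σ p.1))
          (fun q _ => if σ⁻¹ q.1 < σ⁻¹ q.2 then (σ⁻¹ q.1, σ⁻¹ q.2) else (σ⁻¹ q.2, σ⁻¹ q.1))
          ?_ ?_ ?_ ?_ ?_
        · intro p hp
          simp only [Finset.mem_filter, Finset.mem_univ, true_and] at hp ⊢
          by_cases hlt : σ p.1 < σ p.2
          · simpa [hlt] using hlt
          · have hne : σ p.1 ≠ σ p.2 := fun h => hp.ne (σ.injective h)
            have : σ p.2 < σ p.1 := lt_of_le_of_ne (not_lt.1 hlt) hne.symm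
            simpa [hlt] using this
        · intro q hq
          simp only [Finset.mem_filter, Finset.mem_univ, true_and] at hq ⊢
          by_cases hlt : σ⁻¹ q.1 < σ⁻¹ q.2
          · rw [Equiv.Perm.inv_def] at hlt; simpa [hlt] using hlt
          · have hne : σ⁻¹ q.1 ≠ σ⁻¹ q.2 := fun h => hq.ne (σ⁻¹.injective h)
            have : σ⁻¹ q.2 < σ⁻¹ q.1 := lt_of_le_of_ne (not_lt.1 hlt) hne.symm
            rw [Equiv.Perm.inv_def] at hlt this; simpa [hlt] using this
        · intro p hp
          simp only [Finset.mem_filter, Finset.mem_univ, true_and] at hp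
          by_cases hlt : σ p.1 < σ p.2
          · simp [hlt, hp]
          · have hne : σ p.1 ≠ σ p.2 := fun h => hp.ne (σ.injective h)
            have h2 : σ p.2 < σ p.1 := lt_of_le_of_ne (not_lt.1 hlt) hne.symm
            simp [hlt, h2.not_gt, hp, hp.not_gt]
        · intro q hq
          simp only [Finset.mem_filter, Finset.mem_univ, true_and] at hq
          by_cases hlt : σ⁻¹ q.1 < σ⁻¹ q.2
          · rw [Equiv.Perm.inv_def] at hlt; simp [hlt, hq]
          · have hne : σ⁻¹ q.1 ≠ σ⁻¹ q.2 := fun h => hq.ne (σ⁻¹.injective h)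
            have h2 : σ⁻¹ q.2 < σ⁻¹ q.1 := lt_of_le_of_ne (not_lt.1 hlt) hne.symm
            rw [Equiv.Perm.inv_def] at hlt h2; simp [hlt, h2.not_gt, hq, hq.not_gt]
        · intro p _
          by_cases hlt : σ p.1 < σ p.2 <;> simp [hlt]

/-- The Atiyah–Sutcliffe normalized determinant is invariant under permutations of the
points: `D_{U(n)}(x_{σ(1)}, …, x_{σ(n)}) = D_{U(n)}(x₁, …, x_n)` for every `σ ∈ Σ_n`. -/
theorem stmt10 (n : ℕ) (x : Fin n → EuclideanSpace ℝ (Fin 3))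
    (hx : Function.Injective x) (σ : Equiv.Perm (Fin n)) :
    ASD n (x ∘ σ) = ASD n x := by
  classical
  have htpt : ∀ a b, tpt (x ∘ σ) a b = tpt x (σ a) (σ b) := fun a b => rfl
  set M : Matrix (Fin n) (Fin n) ℂ := Matrix.of fun i a : Fin n =>
      (∏ b ∈ Finset.univ.erase a, lin (liftOf (tpt x a b))).coeff i with hM
  have hnum : (Matrix.of fun i a : Fin n =>
      (∏ b ∈ Finset.univ.erase a, lin (liftOf (tpt (x ∘ σ) a b))).coeff i)
      = M.submatrix id σ := by
    ext i a
    simp only [Matrix.of_apply, Matrix.submatrix_apply, id, hM]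
    refine congrArg (fun q => Polynomial.coeff q i) ?_
    have hset : Finset.univ.erase (σ a) = (Finset.univ.erase a).map σ.toEmbedding := by
      rw [Finset.map_erase, Finset.map_univ_equiv]; rfl
    rw [hset, Finset.prod_map]
    exact Finset.prod_congr rfl fun b _ => by rw [htpt]; rfl
  set G : Fin n → Fin n → ℂ := fun a b => det2 (liftOf (tpt x a b)) (liftOf (tpt x b a))
    with hGdef
  have hG : ∀ a b, G b a = -G a b := by
    intro a b; simp only [hGdef, det2]; ring
  have hden : ∏ p ∈ Finset.univ.filter (fun p : Fin n × Fin n => p.1 < p.2),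
      det2 (liftOf (tpt (x ∘ σ) p.1 p.2)) (liftOf (tpt (x ∘ σ) p.2 p.1))
      = ((Equiv.Perm.sign σ : ℤ) : ℂ) *
        ∏ p ∈ Finset.univ.filter (fun p : Fin n × Fin n => p.1 < p.2), G p.1 p.2 := by
    rw [← my_prod_pairs_perm G hG σ]
    exact Finset.prod_congr rfl fun p _ => by rw [htpt, htpt]
  have hsign : ((Equiv.Perm.sign σ : ℤ) : ℂ) ≠ 0 := by
    rcases Int.units_eq_one_or (Equiv.Perm.sign σ) with h | h <;> simp [h]
  unfold ASD
  rw [hnum, Matrix.det_permute', hden]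
  push_cast
  rw [mul_div_mul_left _ _ hsign]
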